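/- Let $X$ be a Banach space and $f : [a,b] \to X$ differentiable with Bochner-integrable derivative. Then $\left\| \int_a^b f(s)\,ds - (b-a)\cdot\frac{f\left(\frac{3a+b}{4}\right)+f\left(\frac{a+3b}{4}\right)}{2} \right\| \le \frac{1}{4}(b-a)\int_a^b \|f'(s)\|\,ds$. -/

import Mathlib

open MeasureTheory intervalIntegral

private lemma aux_smul_ii {X : Type*} [NormedAddCommGroup X] [NormedSpace ℝ X]
    {u v : ℝ} {φ : ℝ → ℝ} {g : ℝ → X} (hφ : Continuous φ)
    (hg : IntervalIntegrable g volume u v) :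
    IntervalIntegrable (fun s => φ s • g s) volume u v := by
  rw [intervalIntegrable_iff] at hg ⊢
  obtain ⟨C, hC⟩ := (isCompact_uIcc (a := u) (b := v)).exists_bound_of_continuousOn
    hφ.continuousOn
  refine (hg.norm.const_mul C).mono'
    (hφ.aestronglyMeasurable.smul hg.aestronglyMeasurable) ?_
  filter_upwards [ae_restrict_mem measurableSet_uIoc] with s hs
  have := hC s (Set.uIoc_subset_uIcc hs)
  calc ‖φ s • g s‖ = ‖φ s‖ * ‖g s‖ := norm_smul _ _
    _ ≤ C * ‖g s‖ := mul_le_mul_of_nonneg_right this (norm_nonneg _)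

private lemma midpt {X : Type*} [NormedAddCommGroup X] [NormedSpace ℝ X] [CompleteSpace X]
    {u v : ℝ} (huv : u ≤ v) {f f' : ℝ → X}
    (hd : ∀ t ∈ Set.Icc u v, HasDerivAt f (f' t) t)
    (hi : IntervalIntegrable f' volume u v) :
    ‖(∫ s in u..v, f s) - (v - u) • f ((u + v) / 2)‖ ≤
      ((v - u) / 2) * ∫ s in u..v, ‖f' s‖ := by
  set c : ℝ := (u + v) / 2 with hc
  have huc : u ≤ c := by rw [hc]; linarith
  have hcv : c ≤ v := by rw [hc]; linarith
  have hsub1 : Set.uIcc u c ⊆ Set.uIcc u v := by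
    rw [Set.uIcc_of_le huc, Set.uIcc_of_le huv]
    exact Set.Icc_subset_Icc le_rfl hcv
  have hsub2 : Set.uIcc c v ⊆ Set.uIcc u v := by
    rw [Set.uIcc_of_le hcv, Set.uIcc_of_le huv]
    exact Set.Icc_subset_Icc huc le_rfl
  have hfc : ContinuousOn f (Set.uIcc u v) := by
    rw [Set.uIcc_of_le huv]
    exact fun t ht => (hd t ht).continuousAt.continuousWithinAt
  have hfint : IntervalIntegrable f volume u v := hfc.intervalIntegrable
  have hi1 : IntervalIntegrable f' volume u c := hi.mono_set hsub1
  have hi2 : IntervalIntegrable f' volume c v := hi.mono_set hsub2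
  have hf1 : IntervalIntegrable f volume u c := hfint.mono_set hsub1
  have hf2 : IntervalIntegrable f volume c v := hfint.mono_set hsub2
  -- FTC on (s - u) • f s over [u, c]
  have key1 : ∫ s in u..c, ((s - u) • f' s + f s) = (c - u) • f c := by
    have := integral_eq_sub_of_hasDerivAt (f := fun s => (s - u) • f s)
      (f' := fun s => (s - u) • f' s + f s) (a := u) (b := c)
      (fun t ht => by
        have hdt : HasDerivAt f (f' t) t := hd t (by
          rw [Set.uIcc_of_le huc] at ht
          exact ⟨ht.1, ht.2.trans hcv⟩)
        simpa using ((hasDerivAt_id t).sub_const u).fun_smul hdt)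
      (((aux_smul_ii (continuous_id.sub continuous_const) hi1)).add hf1)
    simpa using this
  have key2 : ∫ s in c..v, ((s - v) • f' s + f s) = (v - c) • f c := by
    have := integral_eq_sub_of_hasDerivAt (f := fun s => (s - v) • f s)
      (f' := fun s => (s - v) • f' s + f s) (a := c) (b := v)
      (fun t ht => by
        have hdt : HasDerivAt f (f' t) t := hd t (by
          rw [Set.uIcc_of_le hcv] at ht
          exact ⟨huc.trans ht.1, ht.2⟩)
        simpa using ((hasDerivAt_id t).sub_const v).fun_smul hdt)
      (((aux_smul_ii (continuous_id.sub continuous_const) hi2)).add hf2)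
    simp only [sub_self, zero_smul, zero_sub] at this
    rw [← neg_smul, neg_sub] at this
    exact this
  have hsi1 : IntervalIntegrable (fun s => (s - u) • f' s) volume u c :=
    aux_smul_ii (by fun_prop) hi1
  have hsi2 : IntervalIntegrable (fun s => (s - v) • f' s) volume c v :=
    aux_smul_ii (by fun_prop) hi2
  have E1 : (∫ s in u..c, f s) - (c - u) • f c = -∫ s in u..c, (s - u) • f' s := by
    rw [intervalIntegral.integral_add hsi1 hf1] at key1
    rw [← key1]; abel
  have E2 : (∫ s in c..v, f s) - (v - c) • f c = -∫ s in c..v, (s - v) • f' s := by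
    rw [intervalIntegral.integral_add hsi2 hf2] at key2
    rw [← key2]; abel
  have hsplit : (∫ s in u..v, f s) = (∫ s in u..c, f s) + ∫ s in c..v, f s :=
    (integral_add_adjacent_intervals hf1 hf2).symm
  have hsmul : (v - u) • f c = (c - u) • f c + (v - c) • f c := by
    rw [← add_smul]; ring_nf
  have hmain : (∫ s in u..v, f s) - (v - u) • f c =
      (-∫ s in u..c, (s - u) • f' s) + (-∫ s in c..v, (s - v) • f' s) := by
    rw [hsplit, hsmul, ← E1, ← E2]; abel
  rw [hmain]
  have hb1 : ‖∫ s in u..c, (s - u) • f' s‖ ≤ ∫ s in u..c, ((v - u) / 2) * ‖f' s‖ := by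
    have := norm_integral_le_abs_of_norm_le (μ := volume) (a := u) (b := c)
      (f := fun s => (s - u) • f' s) (g := fun s => ((v - u) / 2) * ‖f' s‖)
      ?_ ((hi1.norm).const_mul _)
    · rwa [abs_of_nonneg (intervalIntegral.integral_nonneg huc fun s _ => mul_nonneg (by linarith) (norm_nonneg _))] at this
    · filter_upwards [ae_restrict_mem measurableSet_uIoc] with s hs
      rw [Set.uIoc_of_le huc] at hs
      rw [norm_smul, Real.norm_eq_abs, abs_of_nonneg (by linarith [hs.1.le])]
      have : s - u ≤ (v - u) / 2 := by
        have := hs.2; rw [hc] at this; linarith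
      gcongr
  have hb2 : ‖∫ s in c..v, (s - v) • f' s‖ ≤ ∫ s in c..v, ((v - u) / 2) * ‖f' s‖ := by
    have := norm_integral_le_abs_of_norm_le (μ := volume) (a := c) (b := v)
      (f := fun s => (s - v) • f' s) (g := fun s => ((v - u) / 2) * ‖f' s‖)
      ?_ ((hi2.norm).const_mul _)
    · rwa [abs_of_nonneg (intervalIntegral.integral_nonneg hcv fun s _ => mul_nonneg (by linarith) (norm_nonneg _))] at this
    · filter_upwards [ae_restrict_mem measurableSet_uIoc] with s hs
      rw [Set.uIoc_of_le hcv] at hs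
      rw [norm_smul, Real.norm_eq_abs, abs_of_nonpos (by linarith [hs.2]), neg_sub]
      have : v - s ≤ (v - u) / 2 := by
        have := hs.1; rw [hc] at this; linarith
      gcongr
  calc ‖(-∫ s in u..c, (s - u) • f' s) + (-∫ s in c..v, (s - v) • f' s)‖
      ≤ ‖-∫ s in u..c, (s - u) • f' s‖ + ‖-∫ s in c..v, (s - v) • f' s‖ := norm_add_le _ _
    _ = ‖∫ s in u..c, (s - u) • f' s‖ + ‖∫ s in c..v, (s - v) • f' s‖ := by
        rw [norm_neg, norm_neg]
    _ ≤ (∫ s in u..c, ((v - u) / 2) * ‖f' s‖) + ∫ s in c..v, ((v - u) / 2) * ‖f' s‖ :=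
        add_le_add hb1 hb2
    _ = ∫ s in u..v, ((v - u) / 2) * ‖f' s‖ :=
        integral_add_adjacent_intervals ((hi1.norm).const_mul _) ((hi2.norm).const_mul _)
    _ = ((v - u) / 2) * ∫ s in u..v, ‖f' s‖ := by
        rw [← intervalIntegral.integral_const_mul]

theorem stmt15 {X : Type*} [NormedAddCommGroup X] [NormedSpace ℝ X] [CompleteSpace X]
    {a b : ℝ} (hab : a < b) {f f' : ℝ → X}
    (hderiv : ∀ t ∈ Set.Icc a b, HasDerivAt f (f' t) t)
    (hint : IntervalIntegrable f' volume a b) :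
    ‖(∫ s in a..b, f s) - ((b - a) / 2) • (f ((3 * a + b) / 4) + f ((a + 3 * b) / 4))‖ ≤
      (1 / 4) * (b - a) * (∫ s in a..b, ‖f' s‖) := by
  set m : ℝ := (a + b) / 2 with hm
  have ham : a ≤ m := by rw [hm]; linarith
  have hmb : m ≤ b := by rw [hm]; linarith
  have hab' : a ≤ b := hab.le
  have hsub1 : Set.uIcc a m ⊆ Set.uIcc a b := by
    rw [Set.uIcc_of_le ham, Set.uIcc_of_le hab']
    exact Set.Icc_subset_Icc le_rfl hmb
  have hsub2 : Set.uIcc m b ⊆ Set.uIcc a b := by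
    rw [Set.uIcc_of_le hmb, Set.uIcc_of_le hab']
    exact Set.Icc_subset_Icc ham le_rfl
  have hd1 : ∀ t ∈ Set.Icc a m, HasDerivAt f (f' t) t :=
    fun t ht => hderiv t ⟨ht.1, ht.2.trans hmb⟩
  have hd2 : ∀ t ∈ Set.Icc m b, HasDerivAt f (f' t) t :=
    fun t ht => hderiv t ⟨ham.trans ht.1, ht.2⟩
  have hi1 : IntervalIntegrable f' volume a m := hint.mono_set hsub1
  have hi2 : IntervalIntegrable f' volume m b := hint.mono_set hsub2
  have hfc : ContinuousOn f (Set.uIcc a b) := by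
    rw [Set.uIcc_of_le hab']
    exact fun t ht => (hderiv t ht).continuousAt.continuousWithinAt
  have hfint : IntervalIntegrable f volume a b := hfc.intervalIntegrable
  have hf1 : IntervalIntegrable f volume a m := hfint.mono_set hsub1
  have hf2 : IntervalIntegrable f volume m b := hfint.mono_set hsub2
  have h1 := midpt ham hd1 hi1
  have h2 := midpt hmb hd2 hi2
  have e1 : (a + m) / 2 = (3 * a + b) / 4 := by rw [hm]; ring
  have e2 : (m + b) / 2 = (a + 3 * b) / 4 := by rw [hm]; ring
  rw [e1] at h1
  rw [e2] at h2
  have hsplit : (∫ s in a..b, f s) = (∫ s in a..m, f s) + ∫ s in m..b, f s :=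
    (integral_add_adjacent_intervals hf1 hf2).symm
  have hsmul : ((b - a) / 2) • (f ((3 * a + b) / 4) + f ((a + 3 * b) / 4)) =
      (m - a) • f ((3 * a + b) / 4) + (b - m) • f ((a + 3 * b) / 4) := by
    rw [smul_add]
    congr 2 <;> · rw [hm]; ring_nf
  have heq : (∫ s in a..b, f s) - ((b - a) / 2) • (f ((3 * a + b) / 4) + f ((a + 3 * b) / 4)) =
      ((∫ s in a..m, f s) - (m - a) • f ((3 * a + b) / 4)) +
      ((∫ s in m..b, f s) - (b - m) • f ((a + 3 * b) / 4)) := by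
    rw [hsplit, hsmul]; abel
  have hnsplit : (∫ s in a..b, ‖f' s‖) = (∫ s in a..m, ‖f' s‖) + ∫ s in m..b, ‖f' s‖ :=
    (integral_add_adjacent_intervals hi1.norm hi2.norm).symm
  have hma : (m - a) / 2 = (b - a) / 4 := by rw [hm]; ring
  have hbm : (b - m) / 2 = (b - a) / 4 := by rw [hm]; ring
  rw [heq]
  calc ‖_ + _‖ ≤ ((m - a) / 2) * (∫ s in a..m, ‖f' s‖) +
        ((b - m) / 2) * ∫ s in m..b, ‖f' s‖ :=
        (norm_add_le _ _).trans (add_le_add h1 h2)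
    _ = (1 / 4) * (b - a) * (∫ s in a..b, ‖f' s‖) := by
        rw [hma, hbm, hnsplit]; ring
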